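/- (Coifman–Rochberg) There is a dimensional constant C_n such that for every measurable set E ⊂ ℝⁿ with 0 < |E| < ∞ and every λ ∈ (0,1), the function f = log⁺((1/λ) Mχ_E) belongs to BMO(ℝⁿ) with ‖f‖_{BMO} ≤ C_n, where the constant is independent of E and λ. -/

import Mathlib

open MeasureTheory Metric Set
open scoped ENNReal

/-- The uncentered Hardy–Littlewood maximal operator over cubes (= closed balls in the
sup metric on `ℝⁿ = Fin n → ℝ`), acting on `ℝ≥0∞`-valued functions. -/
noncomputable def maximal {n : ℕ} (f : (Fin n → ℝ) → ℝ≥0∞) (x : Fin n → ℝ) : ℝ≥0∞ :=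
  ⨆ (c : Fin n → ℝ) (r : ℝ) (_ : 0 < r) (_ : x ∈ closedBall c r),
    (volume (closedBall c r))⁻¹ * ∫⁻ y in closedBall c r, f y

/-- `Mχ_E`, the maximal function of the indicator of a set `E`. -/
noncomputable def maximalInd {n : ℕ} (E : Set (Fin n → ℝ)) (x : Fin n → ℝ) : ℝ≥0∞ :=
  maximal (E.indicator 1) x

section Basic
variable {n : ℕ}

lemma vol_cb (c : Fin n → ℝ) {r : ℝ} (hr : 0 ≤ r) :
    volume (closedBall c r) = ENNReal.ofReal ((2*r)^n) := by
  rw [Real.volume_pi_closedBall c hr]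
  simp

lemma vol_cb_pos (c : Fin n → ℝ) {r : ℝ} (hr : 0 < r) :
    0 < volume (closedBall c r) := by
  rw [vol_cb c hr.le]
  positivity

lemma vol_cb_lt_top (c : Fin n → ℝ) {r : ℝ} (hr : 0 ≤ r) :
    volume (closedBall c r) < ∞ := by
  rw [vol_cb c hr]; exact ENNReal.ofReal_lt_top

lemma vol_cb_scale (c : Fin n → ℝ) {r k : ℝ} (hr : 0 ≤ r) (hk : 0 ≤ k) :
    volume (closedBall c (k*r)) = ENNReal.ofReal (k^n) * volume (closedBall c r) := by
  rw [vol_cb c (by positivity), vol_cb c hr, ← ENNReal.ofReal_mul (by positivity)]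
  ring_nf

lemma le_maximal {f : (Fin n → ℝ) → ℝ≥0∞} {x c : Fin n → ℝ} {r : ℝ} (hr : 0 < r)
    (hx : x ∈ closedBall c r) :
    (volume (closedBall c r))⁻¹ * ∫⁻ y in closedBall c r, f y ≤ maximal f x := by
  refine le_iSup₂_of_le c r ?_
  exact le_iSup₂_of_le hr hx le_rfl

lemma maximal_le {f : (Fin n → ℝ) → ℝ≥0∞} {x : Fin n → ℝ} {a : ℝ≥0∞}
    (h : ∀ c : Fin n → ℝ, ∀ r : ℝ, 0 < r → x ∈ closedBall c r →
      (volume (closedBall c r))⁻¹ * ∫⁻ y in closedBall c r, f y ≤ a) :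
    maximal f x ≤ a := by
  refine iSup₂_le fun c r => iSup₂_le fun hr hx => h c r hr hx

lemma lintegral_ind {E s : Set (Fin n → ℝ)} (hE : MeasurableSet E) :
    ∫⁻ y in s, E.indicator 1 y = volume (E ∩ s) := by
  rw [lintegral_indicator_one hE, Measure.restrict_apply hE]

lemma maximalInd_le_one {E : Set (Fin n → ℝ)} (hE : MeasurableSet E) (x : Fin n → ℝ) :
    maximalInd E x ≤ 1 := by
  refine maximal_le fun c r hr hx => ?_
  rw [lintegral_ind hE]
  rw [ENNReal.inv_mul_le_iff (vol_cb_pos c hr).ne' (vol_cb_lt_top c hr.le).ne]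
  calc volume (E ∩ closedBall c r) ≤ volume (closedBall c r) := measure_mono inter_subset_right
  _ = volume (closedBall c r) * 1 := (mul_one _).symm

lemma maximalInd_mono {E F : Set (Fin n → ℝ)} (h : E ⊆ F) (x : Fin n → ℝ) :
    maximalInd E x ≤ maximalInd F x := by
  refine maximal_le fun c r hr hx => ?_
  refine le_trans ?_ (le_maximal hr hx)
  gcongr

lemma maximalInd_lower {E : Set (Fin n → ℝ)} (hE : MeasurableSet E) {x c : Fin n → ℝ}
    {r : ℝ} (hr : 0 < r) (hx : x ∈ closedBall c r) :
    volume (E ∩ closedBall c r) / volume (closedBall c r) ≤ maximalInd E x := by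
  refine le_trans ?_ (le_maximal hr hx)
  rw [lintegral_ind hE, div_eq_mul_inv, mul_comm]

end Basic

section Main
variable {n : ℕ}

lemma maximalInd_subadd {E F G : Set (Fin n → ℝ)} (hEFG : E ⊆ F ∪ G)
    (hF : MeasurableSet F) (hG : MeasurableSet G) (x : Fin n → ℝ) :
    maximalInd E x ≤ maximalInd F x + maximalInd G x := by
  refine maximal_le fun c r hr hx => ?_
  have hpt : ∀ y, E.indicator (1 : (Fin n → ℝ) → ℝ≥0∞) y ≤
      F.indicator 1 y + G.indicator 1 y := by
    intro y
    by_cases hy : y ∈ E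
    · rcases hEFG hy with h | h
      · simp [indicator_apply, hy, h]
      · refine le_add_left ?_
        simp [indicator_apply, hy, h]
    · simp [indicator_apply, hy]
  calc (volume (closedBall c r))⁻¹ * ∫⁻ y in closedBall c r, E.indicator 1 y
      ≤ (volume (closedBall c r))⁻¹ *
        ∫⁻ y in closedBall c r, (F.indicator 1 y + G.indicator 1 y) := by
        exact mul_le_mul_right (lintegral_mono hpt) _
    _ = (volume (closedBall c r))⁻¹ * ((∫⁻ y in closedBall c r, F.indicator 1 y) +
        ∫⁻ y in closedBall c r, G.indicator 1 y) := by
        rw [lintegral_add_left]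
        exact (measurable_one.indicator hF)
    _ = (volume (closedBall c r))⁻¹ * (∫⁻ y in closedBall c r, F.indicator 1 y) +
        (volume (closedBall c r))⁻¹ * ∫⁻ y in closedBall c r, G.indicator 1 y := by
        rw [mul_add]
    _ ≤ maximalInd F x + maximalInd G x := by
        exact add_le_add (le_maximal hr hx) (le_maximal hr hx)

lemma maximalInd_pos {E : Set (Fin n → ℝ)} (hE : MeasurableSet E)
    (hpos : 0 < volume E) (x : Fin n → ℝ) : 0 < maximalInd E x := by
  have hcover : E ⊆ ⋃ k : ℕ, E ∩ closedBall x (k + 1) := by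
    intro z hz
    refine mem_iUnion.2 ⟨⌈dist z x⌉₊, hz, ?_⟩
    simp only [mem_closedBall]
    exact le_trans (Nat.le_ceil _) (by push_cast; linarith)
  have : ∃ k : ℕ, 0 < volume (E ∩ closedBall x (k + 1)) := by
    by_contra hcon
    push_neg at hcon
    simp only [le_zero_iff] at hcon
    have : volume E = 0 := by
      refine le_antisymm (le_trans (measure_mono hcover) ?_) zero_le
      refine le_trans (measure_iUnion_le _) ?_
      simp [hcon]
    exact absurd this hpos.ne'
  obtain ⟨k, hk⟩ := this
  have hr : (0:ℝ) < k + 1 := by positivity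
  have hx : x ∈ closedBall x ((k:ℝ) + 1) := mem_closedBall_self hr.le
  refine lt_of_lt_of_le ?_ (maximalInd_lower hE hr hx)
  refine ENNReal.div_pos hk.ne' (vol_cb_lt_top x hr.le).ne

lemma lsc_maximalInd {E : Set (Fin n → ℝ)} (hE : MeasurableSet E) :
    LowerSemicontinuous (maximalInd E) := by
  intro x a ha
  rw [maximalInd, maximal] at ha
  simp only [lt_iSup_iff] at ha
  obtain ⟨c, r, hr, hx, ha⟩ := ha
  set I : ℝ≥0∞ := ∫⁻ y in closedBall c r, E.indicator 1 y with hI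
  have hIfin : I < ∞ := by
    rw [hI, lintegral_ind hE]
    exact lt_of_le_of_lt (measure_mono inter_subset_right) (vol_cb_lt_top c hr.le)
  have hafin : a < ∞ := lt_of_lt_of_le ha (le_trans le_rfl (le_top))
  have haV : a * volume (closedBall c r) < I := by
    rw [vol_cb c hr.le]
    rw [vol_cb c hr.le, ← ENNReal.div_eq_inv_mul] at ha
    exact (ENNReal.lt_div_iff_mul_lt (Or.inl (by positivity)) (Or.inl ENNReal.ofReal_ne_top)).1 ha
  -- find a dilation factor t > 1
  have hcont : Filter.Tendsto (fun t : ℝ => ENNReal.ofReal (t ^ n) * (a * volume (closedBall c r)))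
      (nhdsWithin 1 (Set.Ioi 1)) (nhds (a * volume (closedBall c r))) := by
    have h0 : Filter.Tendsto (fun t : ℝ => t ^ n) (nhds 1) (nhds 1) := by
      simpa using (continuous_pow n).tendsto (1:ℝ)
    have h1 : Filter.Tendsto (fun t : ℝ => ENNReal.ofReal (t ^ n)) (nhds 1) (nhds 1) := by
      simpa [Function.comp_def] using (ENNReal.continuous_ofReal.tendsto (1:ℝ)).comp h0
    have h2 := ENNReal.Tendsto.mul_const
      (h1.mono_left (nhdsWithin_le_nhds (s := Set.Ioi (1:ℝ))))
      (b := a * volume (closedBall c r)) (Or.inl one_ne_zero)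
    simpa using h2
  have hevent : ∀ᶠ t in nhdsWithin 1 (Set.Ioi 1),
      (fun t : ℝ => ENNReal.ofReal (t ^ n) * (a * volume (closedBall c r))) t < I :=
    hcont.eventually_lt_const haV
  obtain ⟨t, htlt, ht1⟩ := (hevent.and (eventually_mem_nhdsWithin)).exists
  simp only [Set.mem_Ioi] at ht1
  set r' := t * r with hr'def
  have hrr' : r < r' := by
    have := mul_lt_mul_of_pos_right ht1 hr
    simpa [hr'def] using this
  have hr'pos : 0 < r' := lt_trans hr hrr'
  have hV' : volume (closedBall c r') = ENNReal.ofReal (t ^ n) * volume (closedBall c r) :=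
    vol_cb_scale c hr.le (by linarith)
  have haV' : a * volume (closedBall c r') < I := by
    rw [hV', ← mul_assoc, mul_comm a (ENNReal.ofReal (t^n)), mul_assoc]
    exact htlt
  have hV'0 : volume (closedBall c r') ≠ 0 := (vol_cb_pos c hr'pos).ne'
  have hV't : volume (closedBall c r') ≠ ∞ := (vol_cb_lt_top c hr'pos.le).ne
  have hball : Metric.ball x (r' - r) ∈ nhds x := ball_mem_nhds x (by linarith)
  refine Filter.eventually_of_mem hball fun x' hx' => ?_
  have hx'c : x' ∈ closedBall c r' := by
    rw [mem_closedBall]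
    rw [mem_ball] at hx'
    rw [mem_closedBall] at hx
    calc dist x' c ≤ dist x' x + dist x c := dist_triangle _ _ _
      _ ≤ (r' - r) + r := by exact add_le_add hx'.le hx
      _ = r' := by ring
  have hII' : I ≤ ∫⁻ y in closedBall c r', E.indicator 1 y := by
    rw [hI]
    exact lintegral_mono_set (closedBall_subset_closedBall hrr'.le)
  have : a < (volume (closedBall c r'))⁻¹ * I := by
    rw [← ENNReal.div_eq_inv_mul]
    exact (ENNReal.lt_div_iff_mul_lt (Or.inl hV'0) (Or.inl hV't)).2 haV'
  calc a < (volume (closedBall c r'))⁻¹ * I := this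
    _ ≤ (volume (closedBall c r'))⁻¹ * ∫⁻ y in closedBall c r', E.indicator 1 y :=
        mul_le_mul_right hII' _
    _ ≤ maximalInd E x' := le_maximal hr'pos hx'c

lemma measurable_maximalInd {E : Set (Fin n → ℝ)} (hE : MeasurableSet E) :
    Measurable (maximalInd E) := (lsc_maximalInd hE).measurable

end Main

section Weak
variable {n : ℕ}

lemma weak_type (hn : n ≠ 0) {F : Set (Fin n → ℝ)} (hF : MeasurableSet F)
    (hfin : volume F ≠ ∞) {t : ℝ≥0∞} (ht0 : t ≠ 0) (htt : t ≠ ∞) :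
    volume {x | t < maximalInd F x} ≤ ENNReal.ofReal (5 ^ n) * volume F / t := by
  classical
  set T : Set ((Fin n → ℝ) × ℝ) :=
    {p | 0 < p.2 ∧ t * volume (closedBall p.1 p.2) < volume (F ∩ closedBall p.1 p.2)} with hT
  -- covering
  have hcover : {x | t < maximalInd F x} ⊆ ⋃ p ∈ T, closedBall p.1 p.2 := by
    intro x hx
    rw [mem_setOf_eq, maximalInd, maximal] at hx
    simp only [lt_iSup_iff] at hx
    obtain ⟨c, r, hr, hxc, hlt⟩ := hx
    rw [lintegral_ind hF, ← ENNReal.div_eq_inv_mul] at hlt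
    have hmem : (c, r) ∈ T := by
      refine ⟨hr, ?_⟩
      have := (ENNReal.lt_div_iff_mul_lt (Or.inl (vol_cb_pos c hr).ne')
        (Or.inl (vol_cb_lt_top c hr.le).ne)).1 hlt
      show t * volume (closedBall c r) < volume (F ∩ closedBall c r)
      exact this
    exact mem_biUnion hmem hxc
  -- bounded radii
  set R : ℝ := max 1 (volume F / t).toReal with hR
  have hrad : ∀ p ∈ T, p.2 ≤ R := by
    rintro ⟨c, r⟩ ⟨hr, hlt⟩
    have hvol : volume (closedBall c r) ≤ volume F / t := by
      rw [ENNReal.le_div_iff_mul_le (Or.inl ht0) (Or.inl htt), mul_comm]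
      exact le_trans hlt.le (measure_mono inter_subset_left)
    have hWt : volume F / t ≠ ∞ := by
      intro h
      rw [ENNReal.div_eq_top] at h
      rcases h with ⟨_, h2⟩ | ⟨h1, _⟩
      · exact ht0 h2
      · exact hfin h1
    have h2r : (2*r)^n ≤ (volume F / t).toReal := by
      rw [vol_cb c hr.le] at hvol
      exact (ENNReal.ofReal_le_iff_le_toReal hWt).1 hvol
    by_cases h1 : 2*r ≤ 1
    · calc r ≤ 1 := by linarith
        _ ≤ R := le_max_left _ _
    · push_neg at h1
      have : 2*r ≤ (2*r)^n := le_self_pow₀ h1.le hn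
      calc r ≤ 2*r := by linarith
        _ ≤ (volume F / t).toReal := le_trans this h2r
        _ ≤ R := le_max_right _ _
  obtain ⟨u, huT, hdisj, henl⟩ := Vitali.exists_disjoint_subfamily_covering_enlargement_closedBall
    T Prod.fst Prod.snd R hrad 5 (by norm_num)
  -- countability of u
  have hucnt : u.Countable := by
    have hpos : ∀ p : u, 0 < volume (closedBall (p:((Fin n → ℝ) × ℝ)).1 (p:((Fin n → ℝ) × ℝ)).2) := by
      rintro ⟨p, hp⟩
      exact vol_cb_pos _ (huT hp).1
    have hdisj' : Pairwise (Function.onFun (MeasureTheory.AEDisjoint volume)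
        (fun p : u => closedBall (p:((Fin n → ℝ) × ℝ)).1 (p:((Fin n → ℝ) × ℝ)).2)) := by
      rintro ⟨p, hp⟩ ⟨q, hq⟩ hpq
      have hne : p ≠ q := fun h => hpq (Subtype.ext h)
      exact (hdisj hp hq hne).aedisjoint
    have := MeasureTheory.Measure.countable_meas_pos_of_disjoint_iUnion₀
      (μ := volume) (fun p : u => measurableSet_closedBall.nullMeasurableSet) hdisj'
    have huniv : {i : u | 0 < volume (closedBall (i:((Fin n → ℝ) × ℝ)).1 (i:((Fin n → ℝ) × ℝ)).2)}
        = univ := eq_univ_of_forall fun p => hpos p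
    rw [huniv] at this
    rw [← Set.countable_coe_iff]
    exact countable_univ_iff.1 this
  -- measure estimate
  calc volume {x | t < maximalInd F x}
      ≤ volume (⋃ p ∈ T, closedBall p.1 p.2) := measure_mono hcover
    _ ≤ volume (⋃ p ∈ u, closedBall p.1 (5 * p.2)) := by
        refine measure_mono ?_
        refine iUnion₂_subset fun p hp => ?_
        obtain ⟨q, hq, hsub⟩ := henl p hp
        exact subset_biUnion_of_mem (u := fun q : ((Fin n → ℝ) × ℝ) => closedBall q.1 (5*q.2)) hq |>.trans' hsub
    _ ≤ ∑' p : u, volume (closedBall (p:((Fin n → ℝ) × ℝ)).1 (5 * (p:((Fin n → ℝ) × ℝ)).2)) :=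
        measure_biUnion_le _ hucnt _
    _ ≤ ∑' p : u, ENNReal.ofReal (5^n) *
          (volume (F ∩ closedBall (p:((Fin n → ℝ) × ℝ)).1 (p:((Fin n → ℝ) × ℝ)).2) / t) := by
        refine ENNReal.tsum_le_tsum fun p => ?_
        obtain ⟨hp2, hplt⟩ := huT p.2
        rw [vol_cb_scale _ (le_of_lt hp2) (by norm_num)]
        refine mul_le_mul_right ?_ _
        rw [ENNReal.le_div_iff_mul_le (Or.inl ht0) (Or.inl htt), mul_comm]
        exact hplt.le
    _ = ENNReal.ofReal (5^n) * (∑' p : u,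
          volume (F ∩ closedBall (p:((Fin n → ℝ) × ℝ)).1 (p:((Fin n → ℝ) × ℝ)).2)) / t := by
        simp only [div_eq_mul_inv]
        rw [ENNReal.tsum_mul_left, ENNReal.tsum_mul_right, ← mul_assoc]
    _ ≤ ENNReal.ofReal (5^n) * volume F / t := by
        refine ENNReal.div_le_div_right (mul_le_mul_right ?_ _) t
        have : (∑' p : u, volume (F ∩ closedBall (p:((Fin n → ℝ) × ℝ)).1 (p:((Fin n → ℝ) × ℝ)).2))
            = volume (⋃ p : u, (F ∩ closedBall (p:((Fin n → ℝ) × ℝ)).1 (p:((Fin n → ℝ) × ℝ)).2)) := by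
          haveI := hucnt.to_subtype
          refine (measure_iUnion ?_ ?_).symm
          · rintro ⟨p, hp⟩ ⟨q, hq⟩ hpq
            have hne : p ≠ q := fun h => hpq (Subtype.ext h)
            exact Disjoint.mono inter_subset_right inter_subset_right (hdisj hp hq hne)
          · exact fun p => hF.inter measurableSet_closedBall
        rw [this]
        refine measure_mono ?_
        exact iUnion_subset fun p => inter_subset_left

end Weak

section Far
variable {n : ℕ}

lemma far_compare {G : Set (Fin n → ℝ)} (hG : MeasurableSet G) {c₀ x y : Fin n → ℝ} {r₀ : ℝ}
    (hr₀ : 0 < r₀) (hGfar : G ∩ closedBall c₀ (2*r₀) = ∅)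
    (hx : x ∈ closedBall c₀ r₀) (hy : y ∈ closedBall c₀ r₀) :
    maximalInd G x ≤ ENNReal.ofReal (5^n) * maximalInd G y := by
  set K : ℝ≥0∞ := ENNReal.ofReal (5^n) with hKdef
  have hK0 : K ≠ 0 := by rw [hKdef]; positivity
  have hKt : K ≠ ∞ := ENNReal.ofReal_ne_top
  refine maximal_le fun c s hs hxc => ?_
  rw [lintegral_ind hG]
  by_cases hI : volume (G ∩ closedBall c s) = 0
  · rw [hI, mul_zero]
    exact zero_le
  -- the ball must meet G, hence reach outside closedBall c₀ (2r₀)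
  have hne : (G ∩ closedBall c s).Nonempty := by
    rw [nonempty_iff_ne_empty]
    intro h
    rw [h] at hI
    simp at hI
  obtain ⟨z, hzG, hzc⟩ := hne
  have hzfar : ¬ z ∈ closedBall c₀ (2*r₀) := by
    intro h
    have : z ∈ G ∩ closedBall c₀ (2*r₀) := ⟨hzG, h⟩
    rw [hGfar] at this
    exact this
  rw [mem_closedBall, not_le] at hzfar
  rw [mem_closedBall] at hzc hx hy hxc
  have hs2 : r₀ < 2 * s := by
    have h1 : dist z c₀ ≤ dist z c + dist c x + dist x c₀ := dist_triangle4 z c x c₀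
    have h2 : dist c x = dist x c := dist_comm c x
    have h3 : dist x c ≤ s := hxc
    nlinarith [dist_nonneg (x := z) (y := c)]
  have hy5 : y ∈ closedBall c (5 * s) := by
    rw [mem_closedBall]
    calc dist y c ≤ dist y c₀ + dist c₀ x + dist x c := dist_triangle4 y c₀ x c
      _ ≤ r₀ + r₀ + s := by
          refine add_le_add (add_le_add hy ?_) hxc
          rw [dist_comm]; exact hx
      _ ≤ 5 * s := by linarith
  have h5s : 0 < 5 * s := by linarith
  have hvol5 : volume (closedBall c (5*s)) = K * volume (closedBall c s) :=
    vol_cb_scale c hs.le (by norm_num)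
  have hIle : volume (G ∩ closedBall c s) ≤ ∫⁻ y' in closedBall c (5*s), G.indicator 1 y' := by
    rw [lintegral_ind hG]
    exact measure_mono (inter_subset_inter_right _ (closedBall_subset_closedBall (by linarith)))
  calc (volume (closedBall c s))⁻¹ * volume (G ∩ closedBall c s)
      = K * ((volume (closedBall c (5*s)))⁻¹ * volume (G ∩ closedBall c s)) := by
        rw [hvol5, ENNReal.mul_inv (Or.inl hK0) (Or.inl hKt), ← mul_assoc,
          ← mul_assoc, ENNReal.mul_inv_cancel hK0 hKt, one_mul]
    _ ≤ K * ((volume (closedBall c (5*s)))⁻¹ * ∫⁻ y' in closedBall c (5*s), G.indicator 1 y') := by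
        exact mul_le_mul_right (mul_le_mul_right hIle _) _
    _ ≤ K * maximalInd G y := mul_le_mul_right (le_maximal h5s hy5) _

end Far

section RealLemmas

lemma log_est {P v u β A' m : ℝ} (hP : 1 ≤ P) (hm : m = max β A') (hm0 : 0 < m)
    (hlow : m ≤ P * v) (hup : v ≤ u + P * A') (hu : 0 ≤ u)
    (hcase : 0 < β ∨ u = 0) :
    |Real.log v - Real.log m| ≤ Real.log (2*P) + max (Real.log (u/β)) 0 := by
  have hP0 : 0 < P := lt_of_lt_of_le one_pos hP
  have hv : 0 < v := by nlinarith
  have hβm : β ≤ m := hm ▸ le_max_left _ _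
  have hA'm : A' ≤ m := hm ▸ le_max_right _ _
  have hlogP : 0 ≤ Real.log P := Real.log_nonneg hP
  have hlog2P : Real.log P ≤ Real.log (2*P) := Real.log_le_log hP0 (by linarith)
  have hlog2 : Real.log 2 ≤ Real.log (2*P) := Real.log_le_log (by norm_num) (by nlinarith)
  have hmax0 : 0 ≤ max (Real.log (u/β)) 0 := le_max_right _ _
  rw [abs_le]
  constructor
  · -- lower bound : -(...) ≤ log v - log m
    have h1 : Real.log m ≤ Real.log (P * v) := Real.log_le_log hm0 hlow
    rw [Real.log_mul hP0.ne' hv.ne'] at h1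
    linarith
  · by_cases hcase2 : u ≤ P * m
    · have h2 : v ≤ 2 * P * m := by nlinarith
      have h3 : Real.log v ≤ Real.log (2*P*m) := Real.log_le_log hv h2
      rw [mul_assoc, Real.log_mul (by norm_num : (2:ℝ) ≠ 0) (by positivity : P*m ≠ 0),
        Real.log_mul hP0.ne' hm0.ne'] at h3
      have h5 : Real.log (2*P) = Real.log 2 + Real.log P :=
        Real.log_mul (by norm_num) hP0.ne'
      linarith
    · push_neg at hcase2
      have hu0 : 0 < u := lt_trans (by positivity) hcase2
      have hβ0 : 0 < β := by
        rcases hcase with h | h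
        · exact h
        · exact absurd h hu0.ne'
      have h2 : v ≤ 2 * u := by nlinarith
      have h3 : Real.log v ≤ Real.log 2 + Real.log u := by
        have := Real.log_le_log hv h2
        rwa [Real.log_mul (by norm_num : (2:ℝ) ≠ 0) hu0.ne'] at this
      have h4 : Real.log u - Real.log m ≤ max (Real.log (u/β)) 0 := by
        refine le_trans ?_ (le_max_left _ _)
        rw [Real.log_div hu0.ne' hβ0.ne']
        have := Real.log_le_log hβ0 hβm
        linarith
      linarith

lemma logplus_le_tsum {u β : ℝ} (hu : 0 ≤ u) (hβnn : 0 ≤ β) :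
    ENNReal.ofReal (max (Real.log (u / β)) 0) ≤
      ∑' k : ℕ, if β * Real.exp k < u then (1:ℝ≥0∞) else 0 := by
  set L := Real.log (u / β) with hL
  by_cases hL0 : L ≤ 0
  · rw [max_eq_right hL0]
    simp
  push_neg at hL0
  have hq : (1:ℝ) < u / β := by
    by_contra h
    push_neg at h
    rcases le_or_gt (u/β) 0 with h' | h'
    · have hz : u / β = 0 := le_antisymm h' (div_nonneg hu hβnn)
      have : L ≤ 0 := by rw [hL, hz, Real.log_zero]
      linarith
    · exact absurd (Real.log_nonpos h'.le h) (not_le.2 hL0)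
  have hβ0 : 0 < β := by
    rcases lt_or_eq_of_le hβnn with h | h
    · exact h
    · rw [← h, div_zero] at hq; linarith
  have hu0 : 0 < u := by
    have := (one_lt_div hβ0).1 hq
    linarith
  rw [max_eq_left hL0.le]
  set N := ⌈L⌉₊ with hN
  have hLN : L ≤ N := Nat.le_ceil L
  have key : ∀ k ∈ Finset.range N, (if β * Real.exp k < u then (1:ℝ≥0∞) else 0) = 1 := by
    intro k hk
    rw [Finset.mem_range] at hk
    have hkL : (k:ℝ) < L := by
      have h1 : ((k:ℕ):ℝ) + 1 ≤ (N:ℝ) := by exact_mod_cast hk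
      have h2 : (N:ℝ) < L + 1 := Nat.ceil_lt_add_one hL0.le
      linarith
    have hlt : Real.exp k < u / β := by
      calc Real.exp k < Real.exp L := Real.exp_lt_exp.2 hkL
        _ = u / β := by rw [hL, Real.exp_log (by positivity)]
    rw [lt_div_iff₀ hβ0] at hlt
    rw [if_pos (by linarith [mul_comm (Real.exp (k:ℝ)) β])]
  calc ENNReal.ofReal L ≤ ENNReal.ofReal N := ENNReal.ofReal_le_ofReal hLN
    _ = (N : ℝ≥0∞) := by simp
    _ = ∑ k ∈ Finset.range N, (if β * Real.exp k < u then (1:ℝ≥0∞) else 0) := by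
        rw [Finset.sum_congr rfl key]
        simp
    _ ≤ _ := ENNReal.sum_le_tsum _

end RealLemmas

section Near
variable {n : ℕ}

lemma near_bound (hn : n ≠ 0) {F : Set (Fin n → ℝ)} (hF : MeasurableSet F)
    {b : ℝ≥0∞} (hb0 : b ≠ 0) (hbt : b ≠ ∞) (hFfin : volume F ≠ ∞) (Q : Set (Fin n → ℝ)) :
    ∫⁻ y in Q, ENNReal.ofReal (max (Real.log ((maximalInd F y).toReal / b.toReal)) 0)
      ≤ ENNReal.ofReal (5^n) * (volume F / b) * (1 - ENNReal.ofReal (Real.exp (-1)))⁻¹ := by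
  classical
  set S : ℕ → Set (Fin n → ℝ) :=
    fun k => {y | ENNReal.ofReal (b.toReal * Real.exp k) < maximalInd F y} with hS
  have hSmeas : ∀ k, MeasurableSet (S k) :=
    fun k => measurableSet_lt measurable_const (measurable_maximalInd hF)
  have hpt : ∀ y, ENNReal.ofReal (max (Real.log ((maximalInd F y).toReal / b.toReal)) 0)
      ≤ ∑' k : ℕ, (S k).indicator (fun _ => (1:ℝ≥0∞)) y := by
    intro y
    refine le_trans (logplus_le_tsum ENNReal.toReal_nonneg ENNReal.toReal_nonneg) ?_
    refine ENNReal.tsum_le_tsum fun k => ?_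
    by_cases hy : b.toReal * Real.exp k < (maximalInd F y).toReal
    · rw [if_pos hy]
      have hymem : y ∈ S k := by
        rw [hS]
        simp only [mem_setOf_eq]
        rw [ENNReal.ofReal_lt_iff_lt_toReal (by positivity)
          ((maximalInd_le_one hF y).trans_lt ENNReal.one_lt_top).ne]
        exact hy
      rw [indicator_of_mem hymem]
    · rw [if_neg hy]
      exact zero_le
  have hweak : ∀ k : ℕ, volume (S k) ≤
      ENNReal.ofReal (5^n) * (volume F / b) * (ENNReal.ofReal (Real.exp (-1)))^k := by
    intro k
    have ht0 : ENNReal.ofReal (b.toReal * Real.exp k) ≠ 0 := by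
      rw [ne_eq, ENNReal.ofReal_eq_zero, not_le]
      have hb' : 0 < b.toReal := ENNReal.toReal_pos hb0 hbt
      positivity
    have h1 : volume (S k) ≤
        ENNReal.ofReal (5^n) * volume F / ENNReal.ofReal (b.toReal * Real.exp k) :=
      weak_type hn hF hFfin ht0 ENNReal.ofReal_ne_top
    have hsplit : ENNReal.ofReal (b.toReal * Real.exp k) = b * ENNReal.ofReal (Real.exp k) := by
      rw [ENNReal.ofReal_mul ENNReal.toReal_nonneg, ENNReal.ofReal_toReal hbt]
    have hexp : ENNReal.ofReal (Real.exp k) = (ENNReal.ofReal (Real.exp 1))^k := by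
      rw [← ENNReal.ofReal_pow (Real.exp_pos 1).le, ← Real.exp_nat_mul]
      norm_num
    have hinv : (ENNReal.ofReal (Real.exp k))⁻¹ = (ENNReal.ofReal (Real.exp (-1)))^k := by
      have hbase : ENNReal.ofReal (Real.exp (-1)) = (ENNReal.ofReal (Real.exp 1))⁻¹ := by
        rw [Real.exp_neg, ENNReal.ofReal_inv_of_pos (Real.exp_pos 1)]
      rw [hexp, hbase, ENNReal.inv_pow]
    refine le_trans h1 ?_
    rw [hsplit]
    rw [div_eq_mul_inv, ENNReal.mul_inv (Or.inl hb0) (Or.inl hbt)]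
    rw [div_eq_mul_inv, hinv]
    ring_nf
    exact le_rfl
  calc ∫⁻ y in Q, ENNReal.ofReal (max (Real.log ((maximalInd F y).toReal / b.toReal)) 0)
      ≤ ∫⁻ y in Q, ∑' k : ℕ, (S k).indicator (fun _ => (1:ℝ≥0∞)) y := lintegral_mono hpt
    _ = ∑' k : ℕ, ∫⁻ y in Q, (S k).indicator (fun _ => (1:ℝ≥0∞)) y := by
        refine lintegral_tsum fun k => ?_
        exact ((measurable_const).indicator (hSmeas k)).aemeasurable
    _ ≤ ∑' k : ℕ, ENNReal.ofReal (5^n) * (volume F / b) * (ENNReal.ofReal (Real.exp (-1)))^k := by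
        refine ENNReal.tsum_le_tsum fun k => ?_
        have : ∫⁻ y in Q, (S k).indicator (fun _ => (1:ℝ≥0∞)) y = volume (S k ∩ Q) := by
          have := lintegral_ind (n := n) (E := S k) (s := Q) (hSmeas k)
          exact this
        rw [this]
        exact le_trans (measure_mono inter_subset_left) (hweak k)
    _ = ENNReal.ofReal (5^n) * (volume F / b) * (1 - ENNReal.ofReal (Real.exp (-1)))⁻¹ := by
        rw [ENNReal.tsum_mul_left, ENNReal.tsum_geometric]

end Near

section Assembly
variable {n : ℕ}

lemma maximalInd_zero {F : Set (Fin n → ℝ)} (hF : MeasurableSet F)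
    (h0 : volume F = 0) (y : Fin n → ℝ) : maximalInd F y = 0 := by
  refine le_antisymm (maximal_le fun c r hr hx => ?_) zero_le
  rw [lintegral_ind hF]
  have : volume (F ∩ closedBall c r) = 0 :=
    le_antisymm (le_trans (measure_mono inter_subset_left) h0.le) zero_le
  rw [this, mul_zero]

lemma maximalInd_ne_top {E : Set (Fin n → ℝ)} (hE : MeasurableSet E) (x : Fin n → ℝ) :
    maximalInd E x ≠ ∞ :=
  ((maximalInd_le_one hE x).trans_lt ENNReal.one_lt_top).ne

end Assembly

/-- Coifman–Rochberg: there is a dimensional constant `C_n` such that for every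
measurable `E` with `0 < |E| < ∞` and every `λ ∈ (0,1)`, the function
`f = log⁺((1/λ)Mχ_E)` satisfies `‖f‖_{BMO} ≤ C_n`, i.e. for every cube `Q`,
`(1/|Q|)∫_Q |f − f_Q| ≤ C_n`. -/
theorem stmt17 (n : ℕ) :
    ∃ C : ℝ, 0 < C ∧
      ∀ E : Set (Fin n → ℝ), MeasurableSet E → 0 < volume E → volume E < ∞ →
        ∀ l : ℝ, 0 < l → l < 1 →
          ∀ (c : Fin n → ℝ) (r : ℝ), 0 < r →
            (volume (closedBall c r))⁻¹ *
              ∫⁻ y in closedBall c r,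
                (‖(fun x => max (Real.log ((maximalInd E x).toReal / l)) 0) y -
                  ⨍ z in closedBall c r,
                    max (Real.log ((maximalInd E z).toReal / l)) 0‖₊ : ℝ≥0∞) ≤
            ENNReal.ofReal C := by
  classical
  set ρ : ℝ≥0∞ := ENNReal.ofReal (Real.exp (-1)) with hρ
  have hρ1 : ρ < 1 := by
    rw [hρ, ← ENNReal.ofReal_one]
    exact (ENNReal.ofReal_lt_ofReal_iff one_pos).2 (Real.exp_lt_one_iff.2 (by norm_num))
  have hgeo : (1 - ρ)⁻¹ ≠ ∞ := by
    rw [ENNReal.inv_ne_top]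
    intro h
    rw [tsub_eq_zero_iff_le] at h
    exact absurd h (not_le.2 hρ1)
  set Kh : ℝ≥0∞ := ENNReal.ofReal (Real.log (2*5^n)) +
      ENNReal.ofReal (5^n) * (ENNReal.ofReal (2^n) * (1 - ρ)⁻¹) with hKh
  set K : ℝ≥0∞ := 2 * Kh with hK
  have hKhtop : Kh ≠ ∞ := by
    rw [hKh]
    exact (ENNReal.add_lt_top.2 ⟨ENNReal.ofReal_lt_top,
      ENNReal.mul_lt_top ENNReal.ofReal_lt_top
        (ENNReal.mul_lt_top ENNReal.ofReal_lt_top hgeo.lt_top)⟩).ne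
  have hKtop : K ≠ ∞ := by
    rw [hK]
    exact (ENNReal.mul_lt_top (by norm_num) hKhtop.lt_top).ne
  refine ⟨K.toReal + 1, by positivity, ?_⟩
  intro E hE hE0 hEtop l hl0 hl1 c r hr
  have hQpos : 0 < volume (closedBall c r) := vol_cb_pos c hr
  have hQtop : volume (closedBall c r) ≠ ∞ := (vol_cb_lt_top c hr.le).ne
  rcases Nat.eq_zero_or_pos n with hn0 | hnpos
  · -- dimension 0 : everything is constant
    subst hn0
    haveI : Subsingleton (Fin 0 → ℝ) := ⟨fun a b => funext fun i => absurd i.2 (by omega)⟩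
    have hconst : ∀ x, max (Real.log ((maximalInd E x).toReal / l)) 0
        = max (Real.log ((maximalInd E c).toReal / l)) 0 := fun x => by
      rw [Subsingleton.elim x c]
    have havg : (⨍ z in closedBall c r,
        max (Real.log ((maximalInd E z).toReal / l)) 0) =
        max (Real.log ((maximalInd E c).toReal / l)) 0 := by
      rw [setAverage_eq]
      rw [show (fun z => max (Real.log ((maximalInd E z).toReal / l)) 0)
          = fun _ => max (Real.log ((maximalInd E c).toReal / l)) 0 from funext hconst]
      rw [integral_const, measureReal_restrict_apply_univ, smul_smul, measureReal_def,
        inv_mul_cancel₀ (ENNReal.toReal_pos hQpos.ne' hQtop).ne', one_smul]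
    have : ∀ y, (‖max (Real.log ((maximalInd E y).toReal / l)) 0 -
        ⨍ z in closedBall c r, max (Real.log ((maximalInd E z).toReal / l)) 0‖₊ : ℝ≥0∞) = 0 := by
      intro y
      rw [havg, hconst y]
      simp
    simp only [this]
    simp
  -- main case n ≥ 1
  have hn : n ≠ 0 := hnpos.ne'
  set Q := closedBall c r with hQ
  set Q2 := closedBall c (2*r) with hQ2
  set F := E ∩ Q2 with hFdef
  set G := E \ Q2 with hGdef
  have hFm : MeasurableSet F := hE.inter measurableSet_closedBall
  have hGm : MeasurableSet G := hE.diff measurableSet_closedBall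
  have hQ2pos : 0 < volume Q2 := vol_cb_pos c (by linarith)
  have hQ2top : volume Q2 ≠ ∞ := (vol_cb_lt_top c (by linarith)).ne
  have hvol2 : volume Q2 = ENNReal.ofReal (2^n) * volume Q :=
    vol_cb_scale c hr.le (by norm_num)
  have hFfin : volume F ≠ ∞ :=
    ((measure_mono inter_subset_right).trans_lt hQ2top.lt_top).ne
  set b : ℝ≥0∞ := volume F / volume Q2 with hb
  have hbt : b ≠ ∞ := by
    rw [hb]
    exact (ENNReal.div_lt_top hFfin hQ2pos.ne').ne
  set β : ℝ := b.toReal with hβ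
  have hβnn : 0 ≤ β := ENNReal.toReal_nonneg
  set A : ℝ≥0∞ := maximalInd G c with hA
  have hAtop : A ≠ ∞ := maximalInd_ne_top hGm c
  set m : ℝ := max β A.toReal with hm
  have hEFG : E ⊆ F ∪ G := by
    intro z hz
    by_cases h : z ∈ Q2
    · exact Or.inl ⟨hz, h⟩
    · exact Or.inr ⟨hz, h⟩
  have hm0 : 0 < m := by
    by_cases hF0 : volume F = 0
    · have hG0 : 0 < volume G := by
        by_contra h
        push_neg at h
        rw [le_zero_iff] at h
        have : volume E = 0 := by
          refine le_antisymm (le_trans (measure_mono hEFG) ?_) zero_le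
          refine le_trans (measure_union_le _ _) ?_
          rw [hF0, h, add_zero]
        exact absurd this hE0.ne'
      have hApos : 0 < A := maximalInd_pos hGm hG0 c
      have : 0 < A.toReal := ENNReal.toReal_pos hApos.ne' hAtop
      exact lt_of_lt_of_le this (le_max_right _ _)
    · have hbpos : 0 < b := ENNReal.div_pos hF0 hQ2top
      have : 0 < β := ENNReal.toReal_pos hbpos.ne' hbt
      exact lt_of_lt_of_le this (le_max_left _ _)
  have hGfar : G ∩ Q2 = ∅ := diff_inter_self
  have hcQ : c ∈ Q := mem_closedBall_self hr.le
  set fG : (Fin n → ℝ) → ℝ := fun x => max (Real.log ((maximalInd E x).toReal / l)) 0 with hfG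
  set κ : ℝ := max (Real.log (m / l)) 0 with hκ
  set g : (Fin n → ℝ) → ℝ :=
    fun y => max (Real.log ((maximalInd F y).toReal / β)) 0 with hg
  set c₁ : ℝ := Real.log (2*5^n) with hc₁
  have hP1 : (1:ℝ) ≤ 5^n := one_le_pow₀ (by norm_num)
  -- pointwise estimate on Q
  have hpoint : ∀ y ∈ Q, |fG y - κ| ≤ c₁ + g y := by
    intro y hy
    have hMyt : maximalInd E y ≠ ∞ := maximalInd_ne_top hE y
    set v : ℝ := (maximalInd E y).toReal with hv
    have hyQ2 : y ∈ Q2 := by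
      rw [hQ2, mem_closedBall]
      rw [hQ, mem_closedBall] at hy
      linarith
    -- lower bound  m ≤ 5^n v
    have hβlow : β ≤ v := by
      refine ENNReal.toReal_mono hMyt ?_
      rw [hb]
      exact maximalInd_lower hE (by linarith) hyQ2
    have hAlow : A.toReal ≤ 5^n * v := by
      have h1 : A ≤ ENNReal.ofReal (5^n) * maximalInd G y :=
        far_compare hGm hr hGfar hcQ hy
      have h2 : maximalInd G y ≤ maximalInd E y := maximalInd_mono diff_subset y
      have h3 : A ≤ ENNReal.ofReal (5^n) * maximalInd E y :=
        le_trans h1 (mul_le_mul_right h2 _)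
      have h4 := ENNReal.toReal_mono
        (ENNReal.mul_ne_top ENNReal.ofReal_ne_top hMyt) h3
      rwa [ENNReal.toReal_mul, ENNReal.toReal_ofReal (by positivity)] at h4
    have hlow : m ≤ 5^n * v := by
      rw [hm]
      refine max_le ?_ hAlow
      nlinarith [ENNReal.toReal_nonneg (a := maximalInd E y)]
    -- upper bound  v ≤ u + 5^n A.toReal
    set u : ℝ := (maximalInd F y).toReal with hu
    have hup : v ≤ u + 5^n * A.toReal := by
      have h1 : maximalInd E y ≤ maximalInd F y + maximalInd G y :=
        maximalInd_subadd hEFG hFm hGm y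
      have h2 : maximalInd G y ≤ ENNReal.ofReal (5^n) * A :=
        far_compare hGm hr hGfar hy hcQ
      have h3 : maximalInd E y ≤ maximalInd F y + ENNReal.ofReal (5^n) * A :=
        le_trans h1 (add_le_add_right h2 _)
      have hrhs : maximalInd F y + ENNReal.ofReal (5^n) * A ≠ ∞ :=
        (ENNReal.add_lt_top.2 ⟨(maximalInd_ne_top hFm y).lt_top,
          ENNReal.mul_lt_top ENNReal.ofReal_lt_top hAtop.lt_top⟩).ne
      have h4 := ENNReal.toReal_mono hrhs h3
      rwa [ENNReal.toReal_add (maximalInd_ne_top hFm y)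
        (ENNReal.mul_ne_top ENNReal.ofReal_ne_top hAtop), ENNReal.toReal_mul,
        ENNReal.toReal_ofReal (by positivity)] at h4
    have hcase : 0 < β ∨ u = 0 := by
      by_cases hF0 : volume F = 0
      · right
        rw [hu, maximalInd_zero hFm hF0 y]
        simp
      · left
        exact ENNReal.toReal_pos (ENNReal.div_pos hF0 hQ2top).ne' hbt
    have hest := log_est hP1 hm hm0 hlow hup ENNReal.toReal_nonneg hcase
    -- convert |fG y - κ| to |log v - log m|
    have hv0 : 0 < v := by nlinarith
    have h5 : |fG y - κ| ≤ |Real.log (v/l) - Real.log (m/l)| := by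
      rw [hfG, hκ]
      exact abs_max_sub_max_le_abs _ _ 0
    rw [Real.log_div hv0.ne' hl0.ne', Real.log_div hm0.ne' hl0.ne'] at h5
    calc |fG y - κ| ≤ |Real.log v - Real.log m| := by
          refine le_trans h5 (le_of_eq ?_)
          ring_nf
      _ ≤ c₁ + g y := hest
  -- measurability and integrability of fG
  have hfGmeas : Measurable fG := by
    refine Measurable.max ?_ measurable_const
    exact Real.measurable_log.comp (((measurable_maximalInd hE).ennreal_toReal).div_const l)
  have hfGbd : ∀ y, |fG y| ≤ max (Real.log (1/l)) 0 := by
    intro y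
    rw [hfG, abs_of_nonneg (le_max_right _ _)]
    refine max_le_max ?_ le_rfl
    have h1 : (maximalInd E y).toReal ≤ 1 := by
      have := maximalInd_le_one hE y
      calc (maximalInd E y).toReal ≤ (1:ℝ≥0∞).toReal :=
        ENNReal.toReal_mono ENNReal.one_ne_top this
        _ = 1 := by simp
    by_cases h0 : (maximalInd E y).toReal = 0
    · rw [h0]
      simp only [zero_div, Real.log_zero]
      exact Real.log_nonneg (by rw [one_div]; rw [le_inv_comm₀ one_pos hl0]; linarith)
    · have hpos : 0 < (maximalInd E y).toReal := lt_of_le_of_ne ENNReal.toReal_nonneg (Ne.symm h0)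
      refine Real.log_le_log (by positivity) ?_
      gcongr
  have hfGint : IntegrableOn fG Q volume := by
    have hconst : IntegrableOn (fun _ : Fin n → ℝ => max (Real.log (1/l)) 0) Q volume :=
      integrableOn_const hQtop
    exact Integrable.mono' hconst hfGmeas.aestronglyMeasurable.restrict
      (Filter.Eventually.of_forall fun y => by
        rw [Real.norm_eq_abs]; exact hfGbd y)
  set fQ : ℝ := ⨍ z in Q, fG z with hfQ
  -- the central integral bound
  set I : ℝ≥0∞ := ∫⁻ y in Q, ENNReal.ofReal |fG y - κ| with hI
  have hgmeas : Measurable g := by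
    refine Measurable.max ?_ measurable_const
    exact Real.measurable_log.comp (((measurable_maximalInd hFm).ennreal_toReal).div_const β)
  have hc₁0 : 0 ≤ c₁ := Real.log_nonneg (by nlinarith)
  have hIbound : I ≤ Kh * volume Q := by
    have hstep1 : I ≤ ∫⁻ y in Q, (ENNReal.ofReal c₁ + ENNReal.ofReal (g y)) := by
      rw [hI]
      refine lintegral_mono_ae ?_
      rw [ae_restrict_iff' measurableSet_closedBall]
      refine Filter.Eventually.of_forall fun y hy => ?_
      rw [← ENNReal.ofReal_add hc₁0 (le_max_right _ _)]
      exact ENNReal.ofReal_le_ofReal (hpoint y hy)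
    have hstep2 : (∫⁻ y in Q, (ENNReal.ofReal c₁ + ENNReal.ofReal (g y)))
        = ENNReal.ofReal c₁ * volume Q + ∫⁻ y in Q, ENNReal.ofReal (g y) := by
      rw [lintegral_add_left measurable_const, lintegral_const, Measure.restrict_apply_univ]
    have hstep3 : (∫⁻ y in Q, ENNReal.ofReal (g y))
        ≤ ENNReal.ofReal (5^n) * (ENNReal.ofReal (2^n) * (1-ρ)⁻¹) * volume Q := by
      by_cases hF0 : volume F = 0
      · have hg0 : ∀ y, g y = 0 := by
          intro y
          have hz : maximalInd F y = 0 := maximalInd_zero hFm hF0 y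
          simp [hg, hz]
        simp only [hg0, ENNReal.ofReal_zero, lintegral_zero]
        exact zero_le
      · have hb0 : b ≠ 0 := (ENNReal.div_pos hF0 hQ2top).ne'
        have hnear := near_bound hn hFm hb0 hbt hFfin Q
        have hFb : volume F / b = volume Q2 := by
          rw [eq_comm, ENNReal.eq_div_iff hb0 hbt, hb]
          exact ENNReal.div_mul_cancel hQ2pos.ne' hQ2top
        rw [hFb, hvol2] at hnear
        refine le_trans hnear (le_of_eq ?_)
        ring
    calc I ≤ ENNReal.ofReal c₁ * volume Q + ∫⁻ y in Q, ENNReal.ofReal (g y) :=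
          le_trans hstep1 (le_of_eq hstep2)
      _ ≤ ENNReal.ofReal c₁ * volume Q +
          ENNReal.ofReal (5^n) * (ENNReal.ofReal (2^n) * (1-ρ)⁻¹) * volume Q :=
          add_le_add_right hstep3 _
      _ = Kh * volume Q := by rw [hKh]; ring
  -- bound on |κ - fQ|
  have hsub : IntegrableOn (fun z => fG z - κ) Q volume :=
    hfGint.sub (integrableOn_const hQtop)
  have hJ : ENNReal.ofReal (∫ z in Q, |fG z - κ|) = I := by
    rw [hI]
    rw [ofReal_integral_eq_lintegral_ofReal hsub.abs
      (Filter.Eventually.of_forall fun y => abs_nonneg _)]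
  have havgbd : ENNReal.ofReal |κ - fQ| * volume Q ≤ I := by
    have h1 : κ - fQ = (volume Q).toReal⁻¹ * ∫ z in Q, (κ - fG z) := by
      rw [hfQ, setAverage_eq, integral_sub (integrableOn_const hQtop : IntegrableOn (fun _ => κ) Q volume) hfGint,
        integral_const, measureReal_restrict_apply_univ, measureReal_def, smul_eq_mul, smul_eq_mul]
      have hvQ : (volume Q).toReal ≠ 0 := (ENNReal.toReal_pos hQpos.ne' hQtop).ne'
      field_simp
    have h2 : |κ - fQ| ≤ (volume Q).toReal⁻¹ * ∫ z in Q, |fG z - κ| := by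
      rw [h1, abs_mul, abs_of_nonneg (inv_nonneg.2 ENNReal.toReal_nonneg)]
      refine mul_le_mul_of_nonneg_left ?_ (inv_nonneg.2 ENNReal.toReal_nonneg)
      rw [← Real.norm_eq_abs (∫ z in Q, (κ - fG z))]
      refine le_trans (norm_integral_le_integral_norm _) (le_of_eq ?_)
      congr 1
      funext z
      rw [Real.norm_eq_abs, abs_sub_comm]
    calc ENNReal.ofReal |κ - fQ| * volume Q
        ≤ ENNReal.ofReal ((volume Q).toReal⁻¹ * ∫ z in Q, |fG z - κ|) * volume Q := by
          exact mul_le_mul_left (ENNReal.ofReal_le_ofReal h2) _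
      _ = (volume Q)⁻¹ * I * volume Q := by
          rw [ENNReal.ofReal_mul (inv_nonneg.2 ENNReal.toReal_nonneg), hJ,
            ENNReal.ofReal_inv_of_pos (ENNReal.toReal_pos hQpos.ne' hQtop),
            ENNReal.ofReal_toReal hQtop]
      _ = I * ((volume Q)⁻¹ * volume Q) := by ring
      _ = I := by rw [ENNReal.inv_mul_cancel hQpos.ne' hQtop, mul_one]
  -- final computation
  have hptfinal : ∀ y, (‖fG y - fQ‖₊ : ℝ≥0∞) ≤ ENNReal.ofReal |fG y - κ| + ENNReal.ofReal |κ - fQ| := by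
    intro y
    have : (‖fG y - fQ‖₊ : ℝ≥0∞) = ENNReal.ofReal |fG y - fQ| := by
      rw [← enorm_eq_nnnorm, ← ofReal_norm, Real.norm_eq_abs]
    rw [this, ← ENNReal.ofReal_add (abs_nonneg _) (abs_nonneg _)]
    refine ENNReal.ofReal_le_ofReal ?_
    calc |fG y - fQ| = |(fG y - κ) + (κ - fQ)| := by ring_nf
      _ ≤ |fG y - κ| + |κ - fQ| := abs_add_le _ _
  have hfinal : (∫⁻ y in Q, (‖fG y - fQ‖₊ : ℝ≥0∞)) ≤ K * volume Q := by
    calc (∫⁻ y in Q, (‖fG y - fQ‖₊ : ℝ≥0∞))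
        ≤ ∫⁻ y in Q, (ENNReal.ofReal |fG y - κ| + ENNReal.ofReal |κ - fQ|) :=
          lintegral_mono hptfinal
      _ = I + ENNReal.ofReal |κ - fQ| * volume Q := by
          rw [lintegral_add_right _ measurable_const, lintegral_const,
            Measure.restrict_apply_univ]
      _ ≤ Kh * volume Q + Kh * volume Q := add_le_add hIbound (le_trans havgbd hIbound)
      _ = K * volume Q := by rw [hK]; ring
  calc (volume Q)⁻¹ * ∫⁻ y in Q, (‖fG y - fQ‖₊ : ℝ≥0∞)
      ≤ (volume Q)⁻¹ * (K * volume Q) := mul_le_mul_right hfinal _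
    _ = K * ((volume Q)⁻¹ * volume Q) := by ring
    _ = K := by rw [ENNReal.inv_mul_cancel hQpos.ne' hQtop, mul_one]
    _ = ENNReal.ofReal K.toReal := (ENNReal.ofReal_toReal hKtop).symm
    _ ≤ ENNReal.ofReal (K.toReal + 1) := ENNReal.ofReal_le_ofReal (by linarith)
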